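/- arXiv:1305.5780 — 3 statements merged into one kernel-verified Lean document; each statement's English description precedes it below -/
import Mathlib

section
/- Let f : ℝ → ℝ be continuous and odd, let F(u) := ∫₀ᵘ f(s) ds, and assume: (i) 0 ≤ F(u) ≤ (1/2) u f(u) for all u ∈ ℝ; (ii) the map t ↦ f(t)/|t| is nondecreasing on (0,∞) and on (−∞,0). Then for every u ∈ ℝ, every r ≥ −1 and every θ ∈ ℝ one has f(u)·[ r(r/2 + 1) u + (1 + r) θ ] + F(u) − F((1 + r)u + θ) ≤ 0. -/
private lemma key_nonneg (f : ℝ → ℝ) (hf_cont : Continuous f)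
    (hf0 : f 0 = 0)
    (hA : ∀ u : ℝ, 0 ≤ u * f u)
    (hmono : ∀ s t : ℝ, 0 < s → s < t → f s / s ≤ f t / t) :
    ∀ u v : ℝ, 0 ≤ u → 0 ≤ v →
      f u / u * ((v ^ 2 - u ^ 2) / 2) + (∫ s in (0:ℝ)..u, f s) - (∫ s in (0:ℝ)..v, f s) ≤ 0 := by
  intro u v hu hv
  have hint : ∀ a b : ℝ, IntervalIntegrable f MeasureTheory.volume a b :=
    fun a b => hf_cont.intervalIntegrable a b
  have hsub : (∫ s in (0:ℝ)..v, f s) - (∫ s in (0:ℝ)..u, f s) = ∫ s in u..v, f s :=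
    intervalIntegral.integral_interval_sub_left (hint 0 v) (hint 0 u)
  have hlin : ∀ a b : ℝ, (∫ t in a..b, f u / u * t) = f u / u * ((b ^ 2 - a ^ 2) / 2) := by
    intro a b
    rw [intervalIntegral.integral_const_mul, integral_id]
  have hpt_le : ∀ t : ℝ, 0 ≤ t → t ≤ u → f t ≤ f u / u * t := by
    intro t ht htu
    rcases eq_or_lt_of_le ht with h0 | h0
    · rw [← h0, hf0]; nlinarith
    · rcases eq_or_lt_of_le htu with he | hlt
      · subst he
        rw [div_mul_cancel₀ _ (ne_of_gt h0)]
      · have := hmono t u h0 hlt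
        calc f t = f t / t * t := by rw [div_mul_cancel₀ _ (ne_of_gt h0)]
          _ ≤ f u / u * t := by nlinarith
  have hpt_ge : ∀ t : ℝ, 0 ≤ t → u ≤ t → f u / u * t ≤ f t := by
    intro t ht hut
    rcases eq_or_lt_of_le hu with hu0 | hu0
    · rw [← hu0, hf0, zero_div, zero_mul]
      rcases eq_or_lt_of_le ht with h0 | h0
      · rw [← h0, hf0]
      · nlinarith [hA t]
    · have h0 : 0 < t := lt_of_lt_of_le hu0 hut
      rcases eq_or_lt_of_le hut with he | hlt
      · rw [he, div_mul_cancel₀ _ (ne_of_gt h0)]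
      · have := hmono u t hu0 hlt
        calc f u / u * t ≤ f t / t * t := by nlinarith
          _ = f t := by rw [div_mul_cancel₀ _ (ne_of_gt h0)]
  rcases le_total u v with huv | huv
  · -- u ≤ v : ∫_u^v (f u / u) t ≤ ∫_u^v f t
    have hmono_int : (∫ t in u..v, f u / u * t) ≤ ∫ t in u..v, f t := by
      apply intervalIntegral.integral_mono_on huv
        ((continuous_const.mul continuous_id).intervalIntegrable u v) (hint u v)
      intro t ht
      exact hpt_ge t (le_trans hu ht.1) ht.1
    rw [hlin] at hmono_int
    linarith [hsub ▸ hmono_int]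
  · -- v ≤ u
    have hmono_int : (∫ t in v..u, f t) ≤ ∫ t in v..u, f u / u * t := by
      apply intervalIntegral.integral_mono_on huv (hint v u)
        ((continuous_const.mul continuous_id).intervalIntegrable v u)
      intro t ht
      exact hpt_le t (le_trans hv ht.1) ht.2
    rw [hlin] at hmono_int
    have hsub' : (∫ s in (0:ℝ)..u, f s) - (∫ s in (0:ℝ)..v, f s) = ∫ s in v..u, f s :=
      intervalIntegral.integral_interval_sub_left (hint 0 u) (hint 0 v)
    linarith [hsub' ▸ hmono_int]

/-- Pointwise inequality underlying the comparison Lemma 3.5: for `f` continuous,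
odd, with `0 ≤ F(u) ≤ ½ u f(u)` and `t ↦ f(t)/|t|` nondecreasing on `(0,∞)` and
on `(−∞,0)`, one has
`f(u)·[r(r/2+1)u + (1+r)θ] + F(u) − F((1+r)u + θ) ≤ 0` for all `u`, `r ≥ −1`, `θ`. -/
theorem pointwise_comparison_inequality
    (f : ℝ → ℝ) (hf_cont : Continuous f)
    (hf_odd : ∀ u : ℝ, f (-u) = -f u)
    (F : ℝ → ℝ) (hF : ∀ u : ℝ, F u = ∫ s in (0:ℝ)..u, f s)
    (hF_nonneg : ∀ u : ℝ, 0 ≤ F u)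
    (hF_quad : ∀ u : ℝ, F u ≤ (1 / 2) * (u * f u))
    (hmono_pos : ∀ s t : ℝ, 0 < s → s < t → f s / |s| ≤ f t / |t|)
    (hmono_neg : ∀ s t : ℝ, s < t → t < 0 → f s / |s| ≤ f t / |t|) :
    ∀ u r θ : ℝ, -1 ≤ r →
      f u * (r * (r / 2 + 1) * u + (1 + r) * θ) + F u - F ((1 + r) * u + θ) ≤ 0 := by
  have hf0 : f 0 = 0 := by have := hf_odd 0; simp at this; linarith
  have hA : ∀ u : ℝ, 0 ≤ u * f u := fun u => by linarith [hF_nonneg u, hF_quad u]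
  have hmono : ∀ s t : ℝ, 0 < s → s < t → f s / s ≤ f t / t := by
    intro s t hs hst
    have := hmono_pos s t hs hst
    rwa [abs_of_pos hs, abs_of_pos (lt_trans hs hst)] at this
  -- F is even
  have hFeven : ∀ u : ℝ, F (-u) = F u := by
    intro u
    rw [hF, hF]
    have h1 : (∫ x in (0:ℝ)..u, f (-x)) = ∫ x in (-u)..(-(0:ℝ)), f x :=
      intervalIntegral.integral_comp_neg f
    have h2 : (∫ x in (0:ℝ)..u, f (-x)) = ∫ x in (0:ℝ)..u, -f x := by
      congr 1; ext x; rw [hf_odd]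
    rw [intervalIntegral.integral_neg] at h2
    have h3 : (∫ x in (-u)..(-(0:ℝ)), f x) = (∫ x in (0:ℝ)..(-(0:ℝ)), f x) - ∫ x in (0:ℝ)..(-u), f x :=
      (intervalIntegral.integral_interval_sub_left (hf_cont.intervalIntegrable _ _)
        (hf_cont.intervalIntegrable _ _)).symm
    simp only [neg_zero, intervalIntegral.integral_same] at h1 h3
    rw [h3] at h1
    rw [h2] at h1
    linarith
  -- divided function is even
  have hheven : ∀ u : ℝ, f (-u) / (-u) = f u / u := by
    intro u; rw [hf_odd, neg_div_neg_eq]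
  -- key claim for all real u, v
  have key : ∀ u v : ℝ, f u / u * ((v ^ 2 - u ^ 2) / 2) + F u - F v ≤ 0 := by
    intro u v
    have base := key_nonneg f hf_cont hf0 hA hmono |u| |v| (abs_nonneg u) (abs_nonneg v)
    rw [← hF, ← hF] at base
    have e1 : f |u| / |u| = f u / u := by
      rcases abs_cases u with ⟨h, _⟩ | ⟨h, _⟩
      · rw [h]
      · rw [h, hheven]
    have e2 : F |u| = F u := by
      rcases abs_cases u with ⟨h, _⟩ | ⟨h, _⟩
      · rw [h]
      · rw [h, hFeven]
    have e3 : F |v| = F v := by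
      rcases abs_cases v with ⟨h, _⟩ | ⟨h, _⟩
      · rw [h]
      · rw [h, hFeven]
    rw [e1, e2, e3, sq_abs, sq_abs] at base
    exact base
  intro u r θ hr
  set v : ℝ := (1 + r) * u + θ with hv
  by_cases hdeg : u * f u = 0
  · -- degenerate: F u = 0 and f u * u = 0; need f u = 0 too
    rcases mul_eq_zero.mp hdeg with h0 | h0
    · subst h0
      rw [hf0]
      have : F 0 = 0 := le_antisymm (by have := hF_quad 0; simpa using this) (hF_nonneg 0)
      rw [this]
      simp [hF_nonneg]
    · rw [h0]
      have hFu : F u = 0 := le_antisymm (by nlinarith [hF_quad u, h0])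
        (hF_nonneg u)
      rw [hFu]
      simp [hF_nonneg]
  · have hpos : 0 < u * f u := lt_of_le_of_ne (hA u) (Ne.symm hdeg)
    have hune : u ≠ 0 := by rintro rfl; simp at hdeg
    have hfu : u * (f u / u) = f u := mul_div_cancel₀ _ hune
    have hhpos : 0 < f u / u := by
      have : f u / u = u * f u / u ^ 2 := by field_simp
      rw [this]
      positivity
    have hk := key u v
    have hEq : u * (f u / u) * (r * (r / 2 + 1) * u + (1 + r) * θ) =
        f u / u * ((v ^ 2 - u ^ 2) / 2) - f u / u * (θ ^ 2 / 2) := by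
      rw [hv]; ring
    rw [← hfu, hEq]
    have hnn : 0 ≤ f u / u * (θ ^ 2 / 2) := mul_nonneg hhpos.le (by positivity)
    linarith
end

section
/- Let f : ℝ → ℝ be continuous and odd with u f(u) > 0 for all u ≠ 0, let F(u) := ∫₀ᵘ f(s) ds, and assume the map t ↦ f(t)/|t| is strictly increasing on (0,∞) (hence, by oddness and positivity, strictly increasing on all of ℝ∖{0}). Then for every u ≠ 0, every r ≥ −1 and every θ ∈ ℝ with (r, θ) ≠ (0, 0), one has the strict inequality f(u)·[ r(r/2 + 1) u + (1 + r) θ ] + F(u) − F((1 + r)u + θ) < 0. -/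
open intervalIntegral

section aux

variable (f : ℝ → ℝ)

private lemma ftc (hf_cont : Continuous f) (x : ℝ) :
    HasDerivAt (fun u => ∫ s in (0:ℝ)..u, f s) (f x) x :=
  integral_hasDerivAt_right (hf_cont.intervalIntegrable _ _)
    (hf_cont.stronglyMeasurableAtFilter _ _) hf_cont.continuousAt

private lemma F_even (hf_odd : ∀ u : ℝ, f (-u) = -f u) (w : ℝ) :
    (∫ s in (0:ℝ)..(-w), f s) = ∫ s in (0:ℝ)..w, f s := by
  have h : (∫ x in w..(0:ℝ), f (-x)) = ∫ x in (0:ℝ)..(-w), f x := by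
    simpa using intervalIntegral.integral_comp_neg (a := w) (b := (0:ℝ)) f
  have h2 : (∫ x in w..(0:ℝ), f (-x)) = ∫ x in (0:ℝ)..w, f x := by
    simp only [hf_odd, intervalIntegral.integral_neg]
    rw [← intervalIntegral.integral_symm]
  rw [← h, h2]

/-- Key lemma: for `u > 0`, `w ≠ ±u`, we have
`F u - c u²/2 < F w - c w²/2` where `c = f u / u`. -/
private lemma key (hf_cont : Continuous f)
    (hf_odd : ∀ u : ℝ, f (-u) = -f u)
    (hmono : ∀ s t : ℝ, 0 < s → s < t → f s / |s| < f t / |t|)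
    (u w : ℝ) (hu : 0 < u) (hw1 : w ≠ u) (hw2 : w ≠ -u) :
    (∫ s in (0:ℝ)..u, f s) - f u / u * u ^ 2 / 2
      < (∫ s in (0:ℝ)..w, f s) - f u / u * w ^ 2 / 2 := by
  set c : ℝ := f u / u with hc
  set G : ℝ → ℝ := fun x => (∫ s in (0:ℝ)..x, f s) - c * x ^ 2 / 2 with hG
  have hderiv : ∀ x : ℝ, HasDerivAt G (f x - c * x) x := by
    intro x
    have h1 := ftc f hf_cont x
    have h2 : HasDerivAt (fun x : ℝ => c * x ^ 2 / 2) (c * x) x := by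
      have := ((hasDerivAt_pow 2 x).const_mul c).div_const 2
      simpa using this.congr_deriv (by ring)
    exact h1.sub h2
  have hGcont : Continuous G :=
    continuous_iff_continuousAt.mpr fun x => (hderiv x).continuousAt
  -- derivative sign
  have hderivG : ∀ x : ℝ, deriv G x = f x - c * x := fun x => (hderiv x).deriv
  have hneg : ∀ x : ℝ, 0 < x → x < u → f x - c * x < 0 := by
    intro x hx hxu
    have := hmono x u hx hxu
    rw [abs_of_pos hx, abs_of_pos hu] at this
    have : f x / x * x < c * x := by
      exact (mul_lt_mul_of_pos_right this hx)
    rw [div_mul_cancel₀ _ hx.ne'] at this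
    linarith
  have hpos : ∀ x : ℝ, u < x → 0 < f x - c * x := by
    intro x hxu
    have hx : 0 < x := hu.trans hxu
    have := hmono u x hu hxu
    rw [abs_of_pos hx, abs_of_pos hu] at this
    have : c * x < f x / x * x := mul_lt_mul_of_pos_right this hx
    rw [div_mul_cancel₀ _ hx.ne'] at this
    linarith
  have hanti : StrictAntiOn G (Set.Icc 0 u) := by
    apply strictAntiOn_of_deriv_neg (convex_Icc 0 u) hGcont.continuousOn
    intro x hx
    rw [interior_Icc] at hx
    rw [hderivG]
    exact hneg x hx.1 hx.2
  have hmonoG : StrictMonoOn G (Set.Ici u) := by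
    apply strictMonoOn_of_deriv_pos (convex_Ici u) hGcont.continuousOn
    intro x hx
    rw [interior_Ici] at hx
    rw [hderivG]
    exact hpos x hx
  have hnonneg : ∀ w : ℝ, 0 ≤ w → w ≠ u → G u < G w := by
    intro w hw hwu
    rcases lt_or_gt_of_ne hwu with h | h
    · exact hanti ⟨hw, h.le⟩ ⟨hu.le, le_refl u⟩ h
    · exact hmonoG Set.self_mem_Ici (Set.mem_Ici.mpr h.le) h
  show G u < G w
  rcases le_or_gt 0 w with hw | hw
  · exact hnonneg w hw hw1
  · have hGeven : G w = G (-w) := by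
      simp only [hG]
      rw [← F_even f hf_odd w]
      ring_nf
    rw [hGeven]
    apply hnonneg (-w) (by linarith)
    intro h
    exact hw2 (by linarith)

end aux

/-- Strict pointwise inequality (Lemma 2.2 of Szulkin–Weth): for `f` continuous,
odd, with `u f(u) > 0` for `u ≠ 0` and `t ↦ f(t)/|t|` strictly increasing on
`(0,∞)`, one has
`f(u)·[r(r/2+1)u + (1+r)θ] + F(u) − F((1+r)u + θ) < 0`
for all `u ≠ 0`, `r ≥ −1`, `θ` with `(r,θ) ≠ (0,0)`. -/
theorem pointwise_comparison_inequality_strict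
    (f : ℝ → ℝ) (hf_cont : Continuous f)
    (hf_odd : ∀ u : ℝ, f (-u) = -f u)
    (hf_pos : ∀ u : ℝ, u ≠ 0 → 0 < u * f u)
    (F : ℝ → ℝ) (hF : ∀ u : ℝ, F u = ∫ s in (0:ℝ)..u, f s)
    (hmono : ∀ s t : ℝ, 0 < s → s < t → f s / |s| < f t / |t|) :
    ∀ u r θ : ℝ, u ≠ 0 → -1 ≤ r → (r, θ) ≠ (0, 0) →
      f u * (r * (r / 2 + 1) * u + (1 + r) * θ) + F u - F ((1 + r) * u + θ) < 0 := by
  intro u r θ hu hr hne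
  set w : ℝ := (1 + r) * u + θ with hw
  have hufu : 0 < u * f u := hf_pos u hu
  -- positive version of u
  have habs : 0 < |u| := abs_pos.mpr hu
  have hFeven : F (-u) = F u := by rw [hF, hF]; exact F_even f hf_odd u
  -- the constant c = f u / u = f |u| / |u|
  have hc : 0 < f u / u := by
    rcases lt_or_gt_of_ne hu with h | h
    · have : f u < 0 := by nlinarith
      exact div_pos_of_neg_of_neg this h
    · have : 0 < f u := by nlinarith
      exact div_pos this h
  by_cases hwu : w = u
  · -- θ = -r u, value is -(u f u /2) r²
    have hθ : θ = -r * u := by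
      have : (1 + r) * u + θ = u := hwu
      nlinarith [this]
    have hrne : r ≠ 0 := by
      intro h
      apply hne
      rw [h] at hθ
      simp [hθ, h]
    rw [hwu, hθ]
    have : f u * (r * (r / 2 + 1) * u + (1 + r) * (-r * u)) = -(u * f u) * r ^ 2 / 2 := by ring
    rw [this]
    have : 0 < r ^ 2 := by positivity
    nlinarith
  by_cases hwnu : w = -u
  · -- θ = -(2+r) u, value is -(u f u /2)(r+2)²
    have hθ : θ = -(2 + r) * u := by
      have : (1 + r) * u + θ = -u := hwnu
      nlinarith [this]
    rw [hwnu, hFeven, hθ]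
    have : f u * (r * (r / 2 + 1) * u + (1 + r) * (-(2 + r) * u)) + F u - F u
        = -(u * f u) * (r + 2) ^ 2 / 2 := by ring
    rw [this]
    nlinarith [sq_nonneg (r + 1), sq_nonneg (r + 2)]
  -- main case: use the key lemma with v = |u|
  have hkey : F u - f u / u * u ^ 2 / 2 < F w - f u / u * w ^ 2 / 2 := by
    rcases lt_or_gt_of_ne hu with hneg | hpos
    · have h := key f hf_cont hf_odd hmono (-u) w (by linarith)
        (fun h => hwnu h) (fun h => hwu (by linarith))
      rw [← hF, ← hF] at h
      rw [hFeven] at h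
      have hcc : f (-u) / (-u) = f u / u := by
        rw [hf_odd]; field_simp
      rw [hcc] at h
      have : (-u) ^ 2 = u ^ 2 := by ring
      rw [this] at h
      exact h
    · have h := key f hf_cont hf_odd hmono u w hpos hwu hwnu
      rw [← hF, ← hF] at h
      exact h
  -- now algebra
  have hθ2 : 0 ≤ θ ^ 2 := sq_nonneg θ
  have hexp : f u * (r * (r / 2 + 1) * u + (1 + r) * θ)
      = f u / u * (w ^ 2 - u ^ 2) / 2 - f u / u * θ ^ 2 / 2 := by
    field_simp [hw]
    ring
  rw [hexp]
  nlinarith [mul_nonneg hc.le hθ2]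
end

section
/- Let X be a separable real Hilbert space, Y a closed subspace, Z = Y^⊥, and P : X → Y, Q : X → Z the orthogonal projections. Fix an orthonormal basis (a_j)_{j≥0} of Y and define the τ-norm ⦀u⦀ := max( Σ_{j≥0} 2^{-(j+1)} |⟨Pu, a_j⟩| , ‖Qu‖ ). Let (u_n) ⊂ X be a bounded sequence and u ∈ X. Then ⦀u_n − u⦀ → 0 if and only if P u_n ⇀ P u weakly in X and Q u_n → Q u in norm. -/
open Filter
open scoped RealInnerProductSpace

/-- Property of the Kryszewski–Szulkin τ-norm: for a bounded sequence `(u_n)`,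
`⦀u_n − u⦀ → 0` iff `P u_n ⇀ P u` weakly and `Q u_n → Q u` in norm. -/
theorem tau_norm_convergence_iff
    {X : Type*} [NormedAddCommGroup X] [InnerProductSpace ℝ X] [CompleteSpace X]
    [TopologicalSpace.SeparableSpace X]
    (Y : Submodule ℝ X) [CompleteSpace Y]
    (P Q : X → X)
    (hP : ∀ u, P u = (Y.orthogonalProjection u : X))
    (hQ : ∀ u, Q u = (Yᗮ.orthogonalProjection u : X))
    (a : ℕ → X) (ha_mem : ∀ j, a j ∈ Y) (ha_on : Orthonormal ℝ a)
    (ha_span : (Submodule.span ℝ (Set.range a)).topologicalClosure = Y)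
    (T : X → ℝ)
    (hT : ∀ u, T u = max (∑' j : ℕ, (1 / 2 ^ (j + 1) : ℝ) * |⟪P u, a j⟫|) ‖Q u‖)
    (u : ℕ → X) (hu_bdd : ∃ M : ℝ, ∀ n, ‖u n‖ ≤ M) (v : X) :
    Tendsto (fun n => T (u n - v)) atTop (nhds 0) ↔
      ((∀ h : X, Tendsto (fun n => ⟪P (u n), h⟫) atTop (nhds ⟪P v, h⟫)) ∧
        Tendsto (fun n => ‖Q (u n) - Q v‖) atTop (nhds 0)) := by
  obtain ⟨M, hM⟩ := hu_bdd
  -- Projection is norm-nonincreasing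
  have hproj_le : ∀ x : X, ‖(Y.orthogonalProjection x : X)‖ ≤ ‖x‖ := by
    intro x
    calc ‖(Y.orthogonalProjection x : X)‖ = ‖Y.orthogonalProjection x‖ := rfl
      _ ≤ ‖Y.orthogonalProjectionOnto‖ * ‖x‖ := Y.orthogonalProjection.le_opNorm x
      _ ≤ 1 * ‖x‖ := by
          have := Submodule.orthogonalProjectionOnto_norm_le Y
          nlinarith [norm_nonneg x]
      _ = ‖x‖ := one_mul _
  set w : ℕ → X := fun n => P (u n) - P v with hwdef
  set C : ℝ := M + ‖v‖ with hCdef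
  have hC0 : 0 ≤ C := by
    have := hM 0
    have := norm_nonneg (u 0)
    have := norm_nonneg v
    linarith
  have hwY : ∀ n, w n ∈ Y := by
    intro n
    apply Submodule.sub_mem
    · rw [hP]; exact (Y.orthogonalProjection (u n)).2
    · rw [hP]; exact (Y.orthogonalProjection v).2
  have hwC : ∀ n, ‖w n‖ ≤ C := by
    intro n
    have h1 : ‖P (u n)‖ ≤ ‖u n‖ := by rw [hP]; exact hproj_le _
    have h2 : ‖P v‖ ≤ ‖v‖ := by rw [hP]; exact hproj_le _
    calc ‖w n‖ ≤ ‖P (u n)‖ + ‖P v‖ := norm_sub_le _ _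
      _ ≤ C := by have := hM n; simp only [hCdef]; linarith
  -- inner products bounded by C
  have hinnC : ∀ n j, |⟪w n, a j⟫| ≤ C := by
    intro n j
    calc |⟪w n, a j⟫| ≤ ‖w n‖ * ‖a j‖ := abs_real_inner_le_norm _ _
      _ = ‖w n‖ := by rw [ha_on.1 j, mul_one]
      _ ≤ C := hwC n
  -- summability
  have hgeo : Summable (fun j : ℕ => (1 / 2 ^ (j + 1) : ℝ) * C) := by
    refine (summable_geometric_two.mul_left ((1/2) * C)).congr (fun j => ?_)
    rw [div_pow, one_pow, pow_succ]
    ring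
  have hterm_nonneg : ∀ n (j : ℕ), 0 ≤ (1 / 2 ^ (j + 1) : ℝ) * |⟪w n, a j⟫| := by
    intro n j
    positivity
  have hterm_le : ∀ n (j : ℕ),
      (1 / 2 ^ (j + 1) : ℝ) * |⟪w n, a j⟫| ≤ (1 / 2 ^ (j + 1) : ℝ) * C := by
    intro n j
    have : (0:ℝ) ≤ 1 / 2 ^ (j + 1) := by positivity
    exact mul_le_mul_of_nonneg_left (hinnC n j) this
  have hsummable : ∀ n, Summable (fun j : ℕ => (1 / 2 ^ (j + 1) : ℝ) * |⟪w n, a j⟫|) :=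
    fun n => Summable.of_nonneg_of_le (hterm_nonneg n) (hterm_le n) hgeo
  set S : ℕ → ℝ := fun n => ∑' j : ℕ, (1 / 2 ^ (j + 1) : ℝ) * |⟪w n, a j⟫| with hSdef
  set q : ℕ → ℝ := fun n => ‖Q (u n) - Q v‖ with hqdef
  -- linearity of the projections
  have hPsub : ∀ n, P (u n - v) = w n := by
    intro n
    simp only [hwdef, hP, map_sub, Submodule.coe_sub]
  have hQsub : ∀ n, Q (u n - v) = Q (u n) - Q v := by
    intro n
    simp only [hQ, map_sub, Submodule.coe_sub]
  have hTeq : ∀ n, T (u n - v) = max (S n) (q n) := by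
    intro n
    rw [hT, hPsub, hQsub]
  have hS_nonneg : ∀ n, 0 ≤ S n := fun n => tsum_nonneg (hterm_nonneg n)
  have hq_nonneg : ∀ n, 0 ≤ q n := fun n => norm_nonneg _
  -- reduction of weak convergence statement
  have hweak_iff : ∀ h : X,
      Tendsto (fun n => ⟪P (u n), h⟫) atTop (nhds ⟪P v, h⟫) ↔
        Tendsto (fun n => ⟪w n, h⟫) atTop (nhds 0) := by
    intro h
    rw [← tendsto_sub_nhds_zero_iff]
    constructor
    · intro h1; refine h1.congr (fun n => ?_); rw [hwdef]; simp [inner_sub_left]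
    · intro h1; refine h1.congr (fun n => ?_); rw [hwdef]; simp [inner_sub_left]
  constructor
  · -- forward direction
    intro hTconv
    have hTconv' : Tendsto (fun n => max (S n) (q n)) atTop (nhds 0) := by
      refine hTconv.congr (fun n => ?_); rw [hTeq]
    have hSconv : Tendsto S atTop (nhds 0) := by
      refine squeeze_zero hS_nonneg (fun n => le_max_left _ _) hTconv'
    have hqconv : Tendsto q atTop (nhds 0) := by
      refine squeeze_zero hq_nonneg (fun n => le_max_right _ _) hTconv'
    refine ⟨?_, hqconv⟩
    -- coordinatewise convergence
    have hcoord : ∀ j, Tendsto (fun n => ⟪w n, a j⟫) atTop (nhds 0) := by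
      intro j
      have habs : Tendsto (fun n => |⟪w n, a j⟫|) atTop (nhds 0) := by
        refine squeeze_zero (fun n => abs_nonneg _) (fun n => ?_)
          (by simpa only [mul_zero] using hSconv.const_mul ((2:ℝ) ^ (j + 1)))
        have hle : (1 / 2 ^ (j + 1) : ℝ) * |⟪w n, a j⟫| ≤ S n :=
          Summable.le_tsum (hsummable n) j (fun i _ => hterm_nonneg n i)
        calc |⟪w n, a j⟫| = (2:ℝ) ^ (j + 1) * ((1 / 2 ^ (j + 1) : ℝ) * |⟪w n, a j⟫|) := by
              field_simp
          _ ≤ (2:ℝ) ^ (j + 1) * S n := mul_le_mul_of_nonneg_left hle (by positivity)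
      exact squeeze_zero_norm (fun n => le_of_eq (Real.norm_eq_abs _)) habs
    intro h
    rw [hweak_iff h]
    -- replace h by its projection onto Y
    have hred : ∀ n, ⟪w n, h⟫ = ⟪w n, (Y.orthogonalProjection h : X)⟫ := by
      intro n
      have h1 : h - Y.orthogonalProjection h ∈ Yᗮ :=
        Y.sub_starProjection_mem_orthogonal h
      have h3 : ⟪w n, h - (Y.orthogonalProjection h : X)⟫ = 0 :=
        (Submodule.mem_orthogonal Y _).1 h1 (w n) (hwY n)
      rw [inner_sub_right] at h3
      linarith
    have hspan : ∀ y ∈ Submodule.span ℝ (Set.range a),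
        Tendsto (fun n => ⟪w n, y⟫) atTop (nhds 0) := by
      intro y hy
      induction hy using Submodule.span_induction with
      | mem x hx =>
        obtain ⟨j, rfl⟩ := hx
        exact hcoord j
      | zero => simp only [inner_zero_right]; exact tendsto_const_nhds
      | add x y hx hy ihx ihy =>
        have := ihx.add ihy
        rw [add_zero] at this
        refine this.congr (fun n => ?_)
        rw [inner_add_right]
      | smul c x hx ih =>
        have := ih.const_mul c
        rw [mul_zero] at this
        refine this.congr (fun n => ?_)
        rw [real_inner_smul_right]
    -- density argument
    have hPhmem : (Y.orthogonalProjection h : X) ∈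
        closure (Submodule.span ℝ (Set.range a) : Set X) := by
      have hz : ∀ z : X, z ∈ Y → z ∈ closure (Submodule.span ℝ (Set.range a) : Set X) := by
        intro z hzY
        rw [← ha_span] at hzY
        rwa [← Submodule.topologicalClosure_coe]
      exact hz _ (Y.orthogonalProjection h).2
    have hgoal : Tendsto (fun n => ⟪w n, (Y.orthogonalProjection h : X)⟫) atTop
        (nhds 0) := by
      rw [NormedAddCommGroup.tendsto_nhds_zero]
      intro ε hε
      have hδ : (0:ℝ) < ε / (2 * (C + 1)) := by positivity
      obtain ⟨y, hy_mem, hy_close⟩ := Metric.mem_closure_iff.1 hPhmem _ hδ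
      rw [dist_eq_norm] at hy_close
      have hy_conv := hspan y hy_mem
      rw [NormedAddCommGroup.tendsto_nhds_zero] at hy_conv
      filter_upwards [hy_conv (ε/2) (by positivity)] with n hn
      rw [Real.norm_eq_abs] at hn ⊢
      have h1 : |⟪w n, (Y.orthogonalProjection h : X) - y⟫| ≤ C * ‖(Y.orthogonalProjection h : X) - y‖ := by
        calc |⟪w n, (Y.orthogonalProjection h : X) - y⟫|
            ≤ ‖w n‖ * ‖(Y.orthogonalProjection h : X) - y‖ := abs_real_inner_le_norm _ _
          _ ≤ C * ‖(Y.orthogonalProjection h : X) - y‖ :=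
              mul_le_mul_of_nonneg_right (hwC n) (norm_nonneg _)
      have h2 : C * ‖(Y.orthogonalProjection h : X) - y‖ < ε / 2 := by
        have hle : C * ‖(Y.orthogonalProjection h : X) - y‖ ≤
            (C + 1) * ‖(Y.orthogonalProjection h : X) - y‖ :=
          mul_le_mul_of_nonneg_right (by linarith) (norm_nonneg _)
        have hlt : (C + 1) * ‖(Y.orthogonalProjection h : X) - y‖ <
            (C + 1) * (ε / (2 * (C + 1))) :=
          mul_lt_mul_of_pos_left hy_close (by linarith)
        have heq : (C + 1) * (ε / (2 * (C + 1))) = ε / 2 := by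
          field_simp
        linarith
      have h3 : ⟪w n, (Y.orthogonalProjection h : X)⟫ =
          ⟪w n, (Y.orthogonalProjection h : X) - y⟫ + ⟪w n, y⟫ := by
        rw [inner_sub_right]; ring
      calc |⟪w n, (Y.orthogonalProjection h : X)⟫|
          ≤ |⟪w n, (Y.orthogonalProjection h : X) - y⟫| + |⟪w n, y⟫| := by
            rw [h3]; exact abs_add_le _ _
        _ ≤ C * ‖(Y.orthogonalProjection h : X) - y‖ + |⟪w n, y⟫| := by linarith
        _ < ε / 2 + ε / 2 := by linarith
        _ = ε := by ring
    refine hgoal.congr (fun n => (hred n).symm)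
  · -- backward direction
    rintro ⟨hweak, hqconv⟩
    have hcoord : ∀ j, Tendsto (fun n => ⟪w n, a j⟫) atTop (nhds 0) := by
      intro j
      rw [← hweak_iff (a j)]
      exact hweak (a j)
    have hSconv : Tendsto S atTop (nhds 0) := by
      have hdom := tendsto_tsum_of_dominated_convergence (𝓕 := atTop)
        (f := fun n (j : ℕ) => (1 / 2 ^ (j + 1) : ℝ) * |⟪w n, a j⟫|)
        (g := fun _ => (0:ℝ)) (bound := fun j : ℕ => (1 / 2 ^ (j + 1) : ℝ) * C)
        hgeo
        (fun j => by
          have := (hcoord j).abs.const_mul ((1 / 2 ^ (j + 1) : ℝ))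
          simpa using this)
        (Eventually.of_forall (fun n j => by
          rw [Real.norm_eq_abs, abs_of_nonneg (hterm_nonneg n j)]
          exact hterm_le n j))
      simpa only [tsum_zero] using hdom
    have := hSconv.max hqconv
    rw [max_self] at this
    refine this.congr (fun n => (hTeq n).symm)
end
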